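/- arXiv:2408.03742 — 2 statements merged into one kernel-verified Lean document; each statement's English description precedes it below -/
import Mathlib

section
/- Assume c ∈ (0,1) and C0 ≥ 1 are constants such that |K_{w'}(i)| ≤ C0·binom(n,w')·(1 − 2w'/n)^i for all integers 0 ≤ w' ≤ c·n and 0 ≤ i ≤ n/2. Let C be an [n,k] linear binary code with generator matrix G and dual distance d⊥ < n/2; set t⊥ = ⌊(d⊥−1)/2⌋. Let w be an integer with 0 ≤ w ≤ c·n, ε > 0, and let Z be a random vector on F_2^n with pmf P_Z satisfying d_TV(P_{GZ}, U_k) ≤ ε. Then the average absolute bias over all error vectors of weight w satisfies (1/binom(n,w))·Σ_{e : |e| = w} |bias(e·Z)| ≤ sqrt(|C⊥|·V_n(t⊥)/2^{n+1}) + (sqrt(C0·n)/2)·(1 − 2w/n)^{t⊥/2} + sqrt(ε/2). -/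
open Finset Filter
open scoped Classical BigOperators Topology

abbrev BV (n : ℕ) := Fin n → ZMod 2

def wt {n : ℕ} (x : BV n) : ℕ := (Finset.univ.filter (fun i => x i ≠ 0)).card

def dotp {n : ℕ} (x y : BV n) : ZMod 2 := ∑ i, x i * y i

def IsPMF {α : Type*} [Fintype α] (P : α → ℝ) : Prop :=
  (∀ x, 0 ≤ P x) ∧ ∑ x, P x = 1

noncomputable def dTV {α : Type*} [Fintype α] (P Q : α → ℝ) : ℝ :=
  (1/2) * ∑ x, |P x - Q x|

noncomputable def unif (α : Type*) [Fintype α] : α → ℝ := fun _ => 1 / (Fintype.card α)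

noncomputable def unifOn {α : Type*} [Fintype α] (S : Set α) : α → ℝ :=
  fun x => if x ∈ S then 1 / (Nat.card S) else 0

noncomputable def conv {n : ℕ} (P Q : BV n → ℝ) : BV n → ℝ :=
  fun x => ∑ y, P y * Q (x - y)

noncomputable def FT {n : ℕ} (f : BV n → ℝ) : BV n → ℝ :=
  fun y => (1 / 2^n) * ∑ x, f x * (if dotp x y = 0 then (1:ℝ) else -1)

noncomputable def Kraw (n w i : ℕ) : ℝ :=
  ∑ j ∈ Finset.range (w+1), (-1:ℝ)^j * (Nat.choose i j) * (Nat.choose (n-i) (w-j))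

def Vball (n t : ℕ) : ℕ := ∑ j ∈ Finset.range (t+1), Nat.choose n j

noncomputable def pmfMap {m n : ℕ} (G : Matrix (Fin m) (Fin n) (ZMod 2)) (P : BV n → ℝ) :
    BV m → ℝ :=
  fun u => ∑ z ∈ Finset.univ.filter (fun z => G.mulVec z = u), P z

noncomputable def biasOf {n : ℕ} (e : BV n) (P : BV n → ℝ) : ℝ :=
  1/2 - ∑ z ∈ Finset.univ.filter (fun z => dotp e z = 1), P z

noncomputable def bitPMF {n : ℕ} (e : BV n) (P : BV n → ℝ) : ZMod 2 → ℝ :=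
  fun b => ∑ z ∈ Finset.univ.filter (fun z => dotp e z = b), P z

noncomputable def jointPMF {m n : ℕ} (G : Matrix (Fin m) (Fin n) (ZMod 2)) (e : BV n)
    (P : BV n → ℝ) : BV m × ZMod 2 → ℝ :=
  fun p => ∑ z ∈ Finset.univ.filter (fun z => G.mulVec z = p.1 ∧ dotp e z = p.2), P z

noncomputable def prodPMF {m : ℕ} (Pb : ZMod 2 → ℝ) : BV m × ZMod 2 → ℝ :=
  fun p => (1 / 2^m) * Pb p.2

def dualSet {n : ℕ} (C : Set (BV n)) : Set (BV n) := {y | ∀ c ∈ C, dotp y c = 0}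

def rowSpan {k n : ℕ} (G : Matrix (Fin k) (Fin n) (ZMod 2)) : Submodule (ZMod 2) (BV n) :=
  Submodule.span (ZMod 2) (Set.range (fun i => G i))

noncomputable def chi (b : ZMod 2) : ℝ := if b = 0 then 1 else -1

lemma zmod2_cases : ∀ a : ZMod 2, a = 0 ∨ a = 1 := by decide

lemma chi_add (a b : ZMod 2) : chi (a + b) = chi a * chi b := by
  rcases zmod2_cases a with ha | ha <;> rcases zmod2_cases b with hb | hb <;>
    subst ha <;> subst hb <;>
      simp [chi, show (1 + 1 : ZMod 2) = 0 from by decide]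

lemma dotp_add_right {n : ℕ} (e x y : BV n) : dotp e (x + y) = dotp e x + dotp e y := by
  simp only [dotp, Pi.add_apply, mul_add, Finset.sum_add_distrib]

def supp {n : ℕ} (e : BV n) : Finset (Fin n) := Finset.univ.filter (fun i => e i ≠ 0)

def ind {n : ℕ} (E : Finset (Fin n)) : BV n := fun i => if i ∈ E then 1 else 0

lemma wt_eq_card_supp {n : ℕ} (e : BV n) : wt e = (supp e).card := rfl

lemma supp_ind {n : ℕ} (E : Finset (Fin n)) : supp (ind E) = E := by
  ext i; by_cases h : i ∈ E <;> simp [supp, ind, h]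

lemma ind_supp {n : ℕ} (e : BV n) : ind (supp e) = e := by
  funext i
  rcases zmod2_cases (e i) with h | h <;> simp [ind, supp, h]

lemma sum_wt {n : ℕ} {M : Type*} [AddCommMonoid M] (w : ℕ) (f : BV n → M) :
    ∑ e ∈ Finset.univ.filter (fun e : BV n => wt e = w), f e
      = ∑ E ∈ Finset.powersetCard w (Finset.univ : Finset (Fin n)), f (ind E) := by
  refine Finset.sum_nbij' (fun e => supp e) (fun E => ind E) ?_ ?_ ?_ ?_ ?_
  · intro e he
    simp only [Finset.mem_filter] at he
    simpa [Finset.mem_powersetCard_univ, ← wt_eq_card_supp] using he.2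
  · intro E hE
    simp only [Finset.mem_powersetCard_univ] at hE
    exact Finset.mem_filter.mpr ⟨Finset.mem_univ _, by rw [wt_eq_card_supp, supp_ind, hE]⟩
  · intro e _; exact ind_supp e
  · intro E _; exact supp_ind E
  · intro e _; rw [ind_supp]

lemma card_wt {n : ℕ} (j : ℕ) :
    (Finset.univ.filter (fun x : BV n => wt x = j)).card = n.choose j := by
  classical
  rw [Finset.card_eq_sum_ones, sum_wt j (fun _ => 1), Finset.sum_const, smul_eq_mul, mul_one,
    Finset.card_powersetCard, Finset.card_univ, Fintype.card_fin]

lemma chi_natCast (m : ℕ) : chi ((m : ZMod 2)) = (-1 : ℝ) ^ m := by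
  have hz : ((m : ZMod 2) = 0) ↔ Even m := by
    rw [ZMod.natCast_eq_zero_iff, Nat.dvd_iff_mod_eq_zero, Nat.even_iff]
  rcases Nat.even_or_odd m with h | h
  · rw [chi, if_pos (hz.mpr h), h.neg_one_pow]
  · rw [chi, if_neg, h.neg_one_pow]
    rw [hz]
    exact (Nat.not_even_iff_odd.mpr h)

lemma dotp_ind {n : ℕ} (E : Finset (Fin n)) (x : BV n) :
    dotp (ind E) x = ((E ∩ supp x).card : ZMod 2) := by
  have : ∀ i : Fin n, ind E i * x i = if i ∈ E ∩ supp x then 1 else 0 := by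
    intro i
    by_cases hE : i ∈ E
    · rcases zmod2_cases (x i) with hx | hx <;>
        simp [ind, supp, hE, hx]
    · simp [ind, hE]
  rw [dotp]
  simp only [this]
  rw [Finset.sum_ite_mem, Finset.univ_inter, Finset.sum_const, nsmul_eq_mul, mul_one]

lemma count_inter_card {n : ℕ} (s : Finset (Fin n)) (w j : ℕ) (hj : j ≤ w) :
    ((Finset.powersetCard w (Finset.univ : Finset (Fin n))).filter
        (fun E => (E ∩ s).card = j)).card
      = s.card.choose j * ((Finset.univ : Finset (Fin n)) \ s).card.choose (w - j) := by
  classical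
  rw [← Finset.card_powersetCard, ← Finset.card_powersetCard, ← Finset.card_product]
  refine Finset.card_nbij' (fun E => (E ∩ s, E \ s)) (fun p => p.1 ∪ p.2) ?_ ?_ ?_ ?_
  · intro E hE
    simp only [Finset.mem_coe, Finset.mem_filter, Finset.mem_powersetCard_univ] at hE
    obtain ⟨hcard, hint⟩ := hE
    simp only [Finset.mem_coe, Finset.mem_product, Finset.mem_powersetCard]
    refine ⟨⟨Finset.inter_subset_right, hint⟩, ⟨?_, ?_⟩⟩
    · intro i hi
      simp only [Finset.mem_sdiff] at hi ⊢
      exact ⟨Finset.mem_univ i, hi.2⟩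
    · have h1 : (E ∩ s).card + (E \ s).card = E.card := Finset.card_inter_add_card_sdiff E s
      omega
  · intro p hp
    simp only [Finset.mem_coe, Finset.mem_product, Finset.mem_powersetCard] at hp
    obtain ⟨⟨h1s, h1c⟩, ⟨h2s, h2c⟩⟩ := hp
    have hdisj : Disjoint p.1 p.2 := by
      refine Finset.disjoint_left.mpr ?_
      intro a ha1 ha2
      have := h1s ha1
      have := h2s ha2
      simp only [Finset.mem_sdiff] at this
      exact this.2 ‹a ∈ s›
    simp only [Finset.mem_coe, Finset.mem_filter, Finset.mem_powersetCard_univ]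
    constructor
    · rw [Finset.card_union_of_disjoint hdisj, h1c, h2c]; omega
    · have h1 : (p.1 ∪ p.2) ∩ s = p.1 := by
        ext a
        simp only [Finset.mem_inter, Finset.mem_union]
        constructor
        · rintro ⟨ha | ha, has⟩
          · exact ha
          · exact absurd has (by simpa [Finset.mem_sdiff] using h2s ha)
        · intro ha; exact ⟨Or.inl ha, h1s ha⟩
      rw [h1, h1c]
  · intro E hE
    simp only [Finset.mem_coe, Finset.mem_filter] at hE
    show E ∩ s ∪ E \ s = E
    rw [Finset.union_comm, Finset.sdiff_union_inter]
  · intro p hp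
    simp only [Finset.mem_coe, Finset.mem_product, Finset.mem_powersetCard] at hp
    obtain ⟨⟨h1s, h1c⟩, ⟨h2s, h2c⟩⟩ := hp
    have h1 : (p.1 ∪ p.2) ∩ s = p.1 := by
      ext a
      simp only [Finset.mem_inter, Finset.mem_union]
      constructor
      · rintro ⟨ha | ha, has⟩
        · exact ha
        · exact absurd has (by simpa [Finset.mem_sdiff] using h2s ha)
      · intro ha; exact ⟨Or.inl ha, h1s ha⟩
    have h2 : (p.1 ∪ p.2) \ s = p.2 := by
      ext a
      simp only [Finset.mem_sdiff, Finset.mem_union]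
      constructor
      · rintro ⟨ha | ha, has⟩
        · exact absurd (h1s ha) has
        · exact ha
      · intro ha
        refine ⟨Or.inr ha, ?_⟩
        simpa [Finset.mem_sdiff] using h2s ha
    exact Prod.ext h1 h2

lemma sphere_chi {n : ℕ} (w : ℕ) (x : BV n) :
    ∑ e ∈ Finset.univ.filter (fun e : BV n => wt e = w), chi (dotp e x) = Kraw n w (wt x) := by
  classical
  rw [sum_wt]
  have hmap : ∀ E ∈ Finset.powersetCard w (Finset.univ : Finset (Fin n)),
      (E ∩ supp x).card ∈ Finset.range (w+1) := by
    intro E hE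
    rw [Finset.mem_powersetCard_univ] at hE
    rw [Finset.mem_range, Nat.lt_succ_iff, ← hE]
    exact Finset.card_le_card Finset.inter_subset_left
  rw [← Finset.sum_fiberwise_of_maps_to hmap (fun E => chi (dotp (ind E) x))]
  rw [Kraw, wt_eq_card_supp]
  refine Finset.sum_congr rfl ?_
  intro j hj
  rw [Finset.mem_range, Nat.lt_succ_iff] at hj
  have hcong : ∀ E ∈ (Finset.powersetCard w (Finset.univ : Finset (Fin n))).filter
      (fun E => (E ∩ supp x).card = j), chi (dotp (ind E) x) = (-1:ℝ)^j := by
    intro E hE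
    rw [Finset.mem_filter] at hE
    rw [dotp_ind, chi_natCast, hE.2]
  rw [Finset.sum_congr rfl hcong, Finset.sum_const, count_inter_card (supp x) w j hj]
  have hcompl : ((Finset.univ : Finset (Fin n)) \ supp x).card = n - (supp x).card := by
    rw [Finset.card_sdiff_of_subset (Finset.subset_univ _), Finset.card_univ, Fintype.card_fin]
  rw [hcompl, nsmul_eq_mul]
  push_cast
  ring

lemma abs_kraw_le {n w i : ℕ} (hi : i ≤ n) : |Kraw n w i| ≤ (n.choose w : ℝ) := by
  rw [Kraw]
  refine le_trans (Finset.abs_sum_le_sum_abs _ _) ?_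
  have heq : ∀ j ∈ Finset.range (w+1),
      |(-1:ℝ)^j * (Nat.choose i j) * (Nat.choose (n-i) (w-j))|
        = ((Nat.choose i j * Nat.choose (n-i) (w-j) : ℕ) : ℝ) := by
    intro j _
    rw [abs_mul, abs_mul, abs_pow, abs_neg, abs_one, one_pow, one_mul, Nat.cast_mul,
      Nat.abs_cast, Nat.abs_cast]
  rw [Finset.sum_congr rfl heq, ← Nat.cast_sum]
  refine Nat.cast_le.mpr ?_
  have hv : (i + (n - i)).choose w
      = ∑ j ∈ Finset.range (w+1), Nat.choose i j * Nat.choose (n-i) (w-j) := by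
    rw [Nat.add_choose_eq]
    exact Finset.Nat.sum_antidiagonal_eq_sum_range_succ (fun a b => Nat.choose i a * Nat.choose (n-i) b) w
  rw [← hv, Nat.add_sub_cancel' hi]

lemma kraw_reflect {n w i : ℕ} (hi : i ≤ n) : Kraw n w (n - i) = (-1:ℝ)^w * Kraw n w i := by
  rw [Kraw, Kraw, Finset.mul_sum, ← Finset.sum_range_reflect]
  refine Finset.sum_congr rfl ?_
  intro j hj
  rw [Finset.mem_range, Nat.lt_succ_iff] at hj
  rw [show w + 1 - 1 - j = w - j from by omega, Nat.sub_sub_self hi, Nat.sub_sub_self hj]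
  have hsign : (-1:ℝ)^w * (-1:ℝ)^j = (-1:ℝ)^(w-j) := by
    rw [← pow_add, show w + j = (w - j) + 2*j from by omega, pow_add, pow_mul]
    norm_num
  rw [← hsign]
  ring

lemma abs_kraw_reflect {n w i : ℕ} (hi : i ≤ n) : |Kraw n w (n - i)| = |Kraw n w i| := by
  rw [kraw_reflect hi, abs_mul, abs_pow, abs_neg, abs_one, one_pow, one_mul]

section Fiber
variable {n k : ℕ} (G : Matrix (Fin k) (Fin n) (ZMod 2)) (P : BV n → ℝ)

noncomputable def fib (u : BV k) : Finset (BV n) :=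
  Finset.univ.filter (fun z => G.mulVec z = u)

lemma pmfMap_eq (u : BV k) : pmfMap G P u = ∑ z ∈ fib G u, P z := rfl

noncomputable def Ptil : BV n → ℝ :=
  fun z => if pmfMap G P (G.mulVec z) = 0
    then ((2:ℝ)^k)⁻¹ / ((fib G (G.mulVec z)).card : ℝ)
    else P z * (((2:ℝ)^k)⁻¹ / pmfMap G P (G.mulVec z))

variable {G P}

lemma fib_nonempty (hsurj : Function.Surjective (G.mulVec : BV n → BV k)) (u : BV k) : (fib G u).Nonempty := by
  obtain ⟨z, hz⟩ := hsurj u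
  exact ⟨z, by simp [fib, hz]⟩

lemma fib_card_pos (hsurj : Function.Surjective (G.mulVec : BV n → BV k)) (u : BV k) : 0 < ((fib G u).card : ℝ) := by
  have := Finset.card_pos.mpr (fib_nonempty hsurj u)
  exact_mod_cast this

lemma pmfMap_nonneg (hP : IsPMF P) (u : BV k) : 0 ≤ pmfMap G P u :=
  Finset.sum_nonneg (fun z _ => hP.1 z)

lemma Ptil_nonneg (hP : IsPMF P) (z : BV n) : 0 ≤ Ptil G P z := by
  rw [Ptil]
  split_ifs with h
  · positivity
  · have h1 : 0 < pmfMap G P (G.mulVec z) := lt_of_le_of_ne (pmfMap_nonneg hP _) (Ne.symm h)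
    have h2 := hP.1 z
    positivity

lemma sum_fib_Ptil (hsurj : Function.Surjective (G.mulVec : BV n → BV k)) (u : BV k) : ∑ z ∈ fib G u, Ptil G P z = ((2:ℝ)^k)⁻¹ := by
  have hmem : ∀ z ∈ fib G u, G.mulVec z = u := by
    intro z hz; simpa [fib] using hz
  by_cases hQ : pmfMap G P u = 0
  · have : ∀ z ∈ fib G u, Ptil G P z = ((2:ℝ)^k)⁻¹ / ((fib G u).card : ℝ) := by
      intro z hz; rw [Ptil, hmem z hz, if_pos hQ]
    rw [Finset.sum_congr rfl this, Finset.sum_const, nsmul_eq_mul]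
    have := fib_card_pos hsurj (G := G) u
    field_simp
  · have : ∀ z ∈ fib G u, Ptil G P z = P z * (((2:ℝ)^k)⁻¹ / pmfMap G P u) := by
      intro z hz; rw [Ptil, hmem z hz, if_neg hQ]
    rw [Finset.sum_congr rfl this, ← Finset.sum_mul, ← pmfMap_eq]
    field_simp

lemma sum_Ptil (hsurj : Function.Surjective (G.mulVec : BV n → BV k)) : ∑ z, Ptil G P z = 1 := by
  have hcard : (Fintype.card (BV k) : ℝ) = 2^k := by
    simp [Fintype.card_fun]
  rw [← Finset.sum_fiberwise Finset.univ (fun z => G.mulVec z) (Ptil G P)]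
  have : ∀ u : BV k, ∑ z ∈ Finset.univ.filter (fun z => G.mulVec z = u), Ptil G P z
      = ((2:ℝ)^k)⁻¹ := fun u => sum_fib_Ptil hsurj u
  rw [Finset.sum_congr rfl (fun u _ => this u), Finset.sum_const, nsmul_eq_mul, Finset.card_univ,
    hcard]
  field_simp

lemma sum_sq_Ptil (hsurj : Function.Surjective (G.mulVec : BV n → BV k)) (hP : IsPMF P) : ∑ z, (Ptil G P z)^2 ≤ ((2:ℝ)^k)⁻¹ := by
  rw [← Finset.sum_fiberwise Finset.univ (fun z => G.mulVec z) (fun z => (Ptil G P z)^2)]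
  have hfib : ∀ u : BV k, ∑ z ∈ fib G u, (Ptil G P z)^2 ≤ (((2:ℝ)^k)⁻¹)^2 := by
    intro u
    have h1 : ∀ z ∈ fib G u, (Ptil G P z)^2 ≤ Ptil G P z * ((2:ℝ)^k)⁻¹ := by
      intro z hz
      rw [sq]
      refine mul_le_mul_of_nonneg_left ?_ (Ptil_nonneg hP z)
      rw [← sum_fib_Ptil hsurj (P := P) u]
      exact Finset.single_le_sum (fun z' _ => Ptil_nonneg hP z') hz
    refine le_trans (Finset.sum_le_sum h1) ?_
    rw [← Finset.sum_mul, sum_fib_Ptil hsurj, sq]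
  refine le_trans (Finset.sum_le_sum (fun u _ => hfib u)) ?_
  rw [Finset.sum_const, nsmul_eq_mul, Finset.card_univ]
  have hcard : (Fintype.card (BV k) : ℝ) = 2^k := by simp [Fintype.card_fun]
  rw [hcard, sq]
  have h2 : (0:ℝ) < 2^k := by positivity
  rw [← mul_assoc, mul_inv_cancel₀ (ne_of_gt h2), one_mul]

lemma sum_abs_diff_Ptil (hsurj : Function.Surjective (G.mulVec : BV n → BV k)) (hP : IsPMF P) :
    ∑ z, |P z - Ptil G P z| = ∑ u, |pmfMap G P u - ((2:ℝ)^k)⁻¹| := by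
  rw [← Finset.sum_fiberwise Finset.univ (fun z => G.mulVec z) (fun z => |P z - Ptil G P z|)]
  refine Finset.sum_congr rfl ?_
  intro u _
  have hmem : ∀ z ∈ fib G u, G.mulVec z = u := by
    intro z hz; simpa [fib] using hz
  show ∑ z ∈ fib G u, |P z - Ptil G P z| = _
  by_cases hQ : pmfMap G P u = 0
  · have hz0 : ∀ z ∈ fib G u, P z = 0 := by
      intro z hz
      have hsum : ∑ z ∈ fib G u, P z = 0 := by rw [← pmfMap_eq, hQ]
      exact (Finset.sum_eq_zero_iff_of_nonneg (fun z' _ => hP.1 z')).mp hsum z hz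
    have : ∀ z ∈ fib G u, |P z - Ptil G P z|
        = ((2:ℝ)^k)⁻¹ / ((fib G u).card : ℝ) := by
      intro z hz
      rw [Ptil, hmem z hz, if_pos hQ, hz0 z hz, zero_sub, abs_neg, abs_of_nonneg (by positivity)]
    rw [Finset.sum_congr rfl this, Finset.sum_const, nsmul_eq_mul, hQ, zero_sub, abs_neg,
      abs_of_nonneg (by positivity)]
    have := fib_card_pos hsurj (G := G) u
    field_simp
  · have hQpos : 0 < pmfMap G P u := lt_of_le_of_ne (pmfMap_nonneg hP _) (Ne.symm hQ)
    have : ∀ z ∈ fib G u, |P z - Ptil G P z|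
        = P z * |1 - ((2:ℝ)^k)⁻¹ / pmfMap G P u| := by
      intro z hz
      rw [Ptil, hmem z hz, if_neg hQ, ← mul_one_sub, abs_mul, abs_of_nonneg (hP.1 z)]
    rw [Finset.sum_congr rfl this, ← Finset.sum_mul, ← pmfMap_eq, ← abs_of_pos hQpos, ← abs_mul,
      mul_one_sub, abs_of_pos hQpos]
    congr 1
    field_simp

end Fiber

lemma chi_one : chi 1 = -1 := by
  rw [chi, if_neg (by decide)]

lemma chi_zero : chi 0 = 1 := rfl

lemma bias_eq_half_sum {n : ℕ} (e : BV n) (R : BV n → ℝ) (hR : ∑ z, R z = 1) :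
    biasOf e R = (1/2) * ∑ z, R z * chi (dotp e z) := by
  classical
  have hs1 := Finset.sum_filter_add_sum_filter_not Finset.univ
    (fun z : BV n => dotp e z = 1) (fun z => R z)
  have hs2 := Finset.sum_filter_add_sum_filter_not Finset.univ
    (fun z : BV n => dotp e z = 1) (fun z => R z * chi (dotp e z))
  have h1 : ∑ z ∈ Finset.univ.filter (fun z : BV n => dotp e z = 1), R z * chi (dotp e z)
      = -∑ z ∈ Finset.univ.filter (fun z : BV n => dotp e z = 1), R z := by
    rw [← Finset.sum_neg_distrib]
    refine Finset.sum_congr rfl fun z hz => ?_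
    rw [Finset.mem_filter] at hz
    rw [hz.2, chi_one]; ring
  have h2 : ∑ z ∈ Finset.univ.filter (fun z : BV n => ¬(dotp e z = 1)), R z * chi (dotp e z)
      = ∑ z ∈ Finset.univ.filter (fun z : BV n => ¬(dotp e z = 1)), R z := by
    refine Finset.sum_congr rfl fun z hz => ?_
    rw [Finset.mem_filter] at hz
    have h0 : dotp e z = 0 := by
      rcases zmod2_cases (dotp e z) with h | h
      · exact h
      · exact absurd h hz.2
    rw [h0, chi_zero, mul_one]
  rw [hR] at hs1
  rw [h1, h2] at hs2
  rw [biasOf]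
  linarith [hs2]

lemma abs_bias_diff {n : ℕ} (e : BV n) (Pa Pb : BV n → ℝ)
    (ha : ∑ z, Pa z = 1) (hb : ∑ z, Pb z = 1) :
    |biasOf e Pa - biasOf e Pb| ≤ (1/2) * ∑ z, |Pa z - Pb z| := by
  classical
  set A := Finset.univ.filter (fun z : BV n => dotp e z = 1) with hA
  have hdiff : biasOf e Pa - biasOf e Pb = -(∑ z ∈ A, (Pa z - Pb z)) := by
    rw [biasOf, biasOf, Finset.sum_sub_distrib]; ring
  have hsplit := Finset.sum_filter_add_sum_filter_not Finset.univ
    (fun z : BV n => dotp e z = 1) (fun z => Pa z - Pb z)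
  have htot : ∑ z, (Pa z - Pb z) = 0 := by
    rw [Finset.sum_sub_distrib, ha, hb]; ring
  rw [htot] at hsplit
  have habs1 : |∑ z ∈ A, (Pa z - Pb z)| ≤ ∑ z ∈ A, |Pa z - Pb z| :=
    Finset.abs_sum_le_sum_abs _ _
  have habs2 : |∑ z ∈ A, (Pa z - Pb z)|
      ≤ ∑ z ∈ Finset.univ.filter (fun z : BV n => ¬(dotp e z = 1)), |Pa z - Pb z| := by
    have : ∑ z ∈ A, (Pa z - Pb z)
        = -∑ z ∈ Finset.univ.filter (fun z : BV n => ¬(dotp e z = 1)), (Pa z - Pb z) := by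
      linarith [hsplit]
    rw [this, abs_neg]
    exact Finset.abs_sum_le_sum_abs _ _
  have hsum := Finset.sum_filter_add_sum_filter_not Finset.univ
    (fun z : BV n => dotp e z = 1) (fun z => |Pa z - Pb z|)
  rw [hdiff, abs_neg]
  linarith [habs1, habs2, hsum]

lemma abs_bias_le_half {n : ℕ} (e : BV n) (R : BV n → ℝ) (hR : IsPMF R) :
    |biasOf e R| ≤ 1/2 := by
  have h0 : 0 ≤ ∑ z ∈ Finset.univ.filter (fun z : BV n => dotp e z = 1), R z :=
    Finset.sum_nonneg (fun z _ => hR.1 z)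
  have h1 : ∑ z ∈ Finset.univ.filter (fun z : BV n => dotp e z = 1), R z ≤ 1 := by
    rw [← hR.2]
    exact Finset.sum_le_sum_of_subset_of_nonneg (Finset.filter_subset _ _)
      (fun z _ _ => hR.1 z)
  rw [biasOf, abs_le]
  constructor <;> linarith

lemma sphere_sq_eq {n : ℕ} (w : ℕ) (R : BV n → ℝ) :
    ∑ e ∈ Finset.univ.filter (fun e : BV n => wt e = w), (∑ z, R z * chi (dotp e z))^2
      = ∑ z : BV n, ∑ z' : BV n, R z * R z' * Kraw n w (wt (z + z')) := by
  classical
  have hexp : ∀ e : BV n, (∑ z, R z * chi (dotp e z))^2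
      = ∑ z : BV n, ∑ z' : BV n, R z * R z' * chi (dotp e (z + z')) := by
    intro e
    rw [sq, Finset.sum_mul_sum]
    refine Finset.sum_congr rfl fun z _ => Finset.sum_congr rfl fun z' _ => ?_
    rw [dotp_add_right, chi_add]; ring
  rw [Finset.sum_congr rfl (fun e _ => hexp e)]
  rw [Finset.sum_comm]
  refine Finset.sum_congr rfl fun z _ => ?_
  rw [Finset.sum_comm]
  refine Finset.sum_congr rfl fun z' _ => ?_
  rw [← Finset.mul_sum, sphere_chi]

lemma add_add_cancel_bv {n : ℕ} (z x : BV n) : z + (z + x) = x := by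
  funext i
  show z i + (z i + x i) = x i
  rcases zmod2_cases (z i) with h | h <;> rcases zmod2_cases (x i) with h' | h' <;>
    rw [h, h'] <;> decide

lemma wt_le {n : ℕ} (x : BV n) : wt x ≤ n := by
  rw [wt_eq_card_supp]
  calc (supp x).card ≤ (Finset.univ : Finset (Fin n)).card := Finset.card_le_card (Finset.subset_univ _)
  _ = n := by rw [Finset.card_univ, Fintype.card_fin]

lemma card_wt_le {n t : ℕ} :
    (Finset.univ.filter (fun x : BV n => wt x ≤ t)).card = Vball n t := by
  classical
  rw [Finset.card_eq_sum_card_fiberwise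
    (f := fun x : BV n => wt x) (t := Finset.range (t+1))
    (fun x hx => by rw [Finset.mem_coe, Finset.mem_filter] at hx; rw [Finset.mem_coe, Finset.mem_range]; exact Nat.lt_succ_of_le hx.2)]
  rw [Vball]
  refine Finset.sum_congr rfl fun j hj => ?_
  rw [Finset.mem_range, Nat.lt_succ_iff] at hj
  rw [← card_wt (n := n) j]
  congr 1
  ext x
  simp only [Finset.mem_filter, Finset.mem_univ, true_and]
  constructor
  · rintro ⟨_, h⟩; exact h
  · intro h; exact ⟨le_trans (le_of_eq h) hj, h⟩

lemma wt_add_ones {n : ℕ} (x : BV n) : wt (x + (fun _ => 1)) = n - wt x := by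
  have hsupp : supp (x + (fun _ => 1)) = (supp x)ᶜ := by
    ext i
    simp only [supp, Finset.mem_compl, Finset.mem_filter, Finset.mem_univ, true_and,
      Pi.add_apply]
    rcases zmod2_cases (x i) with h | h <;> rw [h] <;> decide
  rw [wt_eq_card_supp, hsupp, Finset.card_compl, Fintype.card_fin, ← wt_eq_card_supp]

lemma card_bad_le {n t : ℕ} (htn : t ≤ n) :
    (Finset.univ.filter (fun x : BV n => wt x ≤ t ∨ n - t ≤ wt x)).card
      ≤ 2 * Vball n t := by
  classical
  have hsub : Finset.univ.filter (fun x : BV n => wt x ≤ t ∨ n - t ≤ wt x)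
      ⊆ Finset.univ.filter (fun x : BV n => wt x ≤ t)
        ∪ Finset.univ.filter (fun x : BV n => n - t ≤ wt x) := by
    intro x hx
    rw [Finset.mem_filter] at hx
    rw [Finset.mem_union, Finset.mem_filter, Finset.mem_filter]
    rcases hx.2 with h | h
    · exact Or.inl ⟨hx.1, h⟩
    · exact Or.inr ⟨hx.1, h⟩
  refine le_trans (Finset.card_le_card hsub) (le_trans (Finset.card_union_le _ _) ?_)
  have h2 : (Finset.univ.filter (fun x : BV n => n - t ≤ wt x)).card
      ≤ (Finset.univ.filter (fun x : BV n => wt x ≤ t)).card := by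
    refine Finset.card_le_card_of_injOn (fun x => x + (fun _ => 1)) ?_ ?_
    · intro x hx
      rw [Finset.mem_coe, Finset.mem_filter] at hx ⊢
      refine ⟨Finset.mem_univ _, ?_⟩
      rw [wt_add_ones]
      have := wt_le x
      omega
    · intro x _ y _ hxy
      have := congrArg (fun v => v + (fun _ => (1 : ZMod 2))) hxy
      simpa [add_assoc, add_add_cancel_bv] using hxy
  rw [card_wt_le] at h2 ⊢
  omega

lemma sum_shift_sq {n : ℕ} (R : BV n → ℝ) (x : BV n) :
    ∑ z : BV n, (R (z + x))^2 = ∑ z : BV n, (R z)^2 :=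
  Fintype.sum_equiv (Equiv.addRight x) _ _ (fun z => rfl)

lemma sum_shift {n : ℕ} (R : BV n → ℝ) (x : BV n) :
    ∑ z : BV n, R (z + x) = ∑ z : BV n, R z :=
  Fintype.sum_equiv (Equiv.addRight x) _ _ (fun z => rfl)

lemma double_sum_bound {n : ℕ} (k w t : ℕ) (R : BV n → ℝ) (hR0 : ∀ z, 0 ≤ R z)
    (hR1 : ∑ z, R z = 1) (hR2 : ∑ z, (R z)^2 ≤ ((2:ℝ)^k)⁻¹) (M : ℝ) (hM : 0 ≤ M)
    (hmid : ∀ i : ℕ, t ≤ i → i ≤ n - t → |Kraw n w i| ≤ M)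
    (htn : t ≤ n) :
    ∑ z : BV n, ∑ z' : BV n, R z * R z' * Kraw n w (wt (z + z'))
      ≤ (n.choose w : ℝ) * (2 * (Vball n t : ℝ) * ((2:ℝ)^k)⁻¹) + M := by
  classical
  set B : BV n → ℝ := fun x => if wt x ≤ t ∨ n - t ≤ wt x then (n.choose w : ℝ) else M
    with hB
  have hBnn : ∀ x, 0 ≤ B x := by
    intro x; rw [hB]; dsimp only
    split_ifs
    · positivity
    · exact hM
  have hKB : ∀ x : BV n, Kraw n w (wt x) ≤ B x := by
    intro x
    refine le_trans (le_abs_self _) ?_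
    rw [hB]; dsimp only
    split_ifs with h
    · exact abs_kraw_le (wt_le x)
    · push_neg at h
      exact hmid (wt x) (le_of_lt h.1) (le_of_lt h.2)
  have step1 : ∑ z : BV n, ∑ z' : BV n, R z * R z' * Kraw n w (wt (z + z'))
      ≤ ∑ z : BV n, ∑ z' : BV n, R z * R z' * B (z + z') := by
    refine Finset.sum_le_sum fun z _ => Finset.sum_le_sum fun z' _ => ?_
    exact mul_le_mul_of_nonneg_left (hKB _) (mul_nonneg (hR0 z) (hR0 z'))
  have step2 : ∀ z : BV n, ∑ z' : BV n, R z * R z' * B (z + z')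
      = ∑ x : BV n, R z * R (z + x) * B x := by
    intro z
    refine (Fintype.sum_equiv (Equiv.addLeft z)
      (fun x => R z * R (z + x) * B x) (fun z' => R z * R z' * B (z + z')) ?_).symm
    intro x
    show R z * R (z + x) * B x = R z * R (z + x) * B (z + (z + x))
    rw [add_add_cancel_bv]
  have step3 : ∑ z : BV n, ∑ x : BV n, R z * R (z + x) * B x
      = ∑ x : BV n, (∑ z : BV n, R z * R (z + x)) * B x := by
    rw [Finset.sum_comm]
    exact Finset.sum_congr rfl fun x _ => by rw [Finset.sum_mul]
  set H : BV n → ℝ := fun x => ∑ z : BV n, R z * R (z + x) with hH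
  have hHnn : ∀ x, 0 ≤ H x := fun x =>
    Finset.sum_nonneg fun z _ => mul_nonneg (hR0 z) (hR0 _)
  have hHle : ∀ x, H x ≤ ((2:ℝ)^k)⁻¹ := by
    intro x
    have h1 : ∀ z : BV n, R z * R (z + x) ≤ ((R z)^2 + (R (z + x))^2)/2 := by
      intro z
      have := two_mul_le_add_sq (R z) (R (z + x))
      linarith
    refine le_trans (Finset.sum_le_sum fun z _ => h1 z) ?_
    rw [← Finset.sum_div, Finset.sum_add_distrib, sum_shift_sq]
    linarith [hR2]
  have hHsum : ∑ x : BV n, H x = 1 := by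
    rw [hH]
    dsimp only
    rw [Finset.sum_comm]
    have : ∀ z : BV n, ∑ x : BV n, R z * R (z + x) = R z := by
      intro z
      rw [← Finset.mul_sum]
      have : ∑ x : BV n, R (z + x) = 1 := by
        rw [Fintype.sum_equiv (Equiv.addLeft z) (fun x => R (z + x)) R (fun x => rfl)]
        exact hR1
      rw [this, mul_one]
    rw [Finset.sum_congr rfl fun z _ => this z, hR1]
  have step4 : ∑ x : BV n, H x * B x
      ≤ (n.choose w : ℝ) * (2 * (Vball n t : ℝ) * ((2:ℝ)^k)⁻¹) + M := by
    rw [← Finset.sum_filter_add_sum_filter_not Finset.univ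
      (fun x : BV n => wt x ≤ t ∨ n - t ≤ wt x) (fun x => H x * B x)]
    have hpart1 : ∑ x ∈ Finset.univ.filter (fun x : BV n => wt x ≤ t ∨ n - t ≤ wt x),
        H x * B x ≤ (n.choose w : ℝ) * (2 * (Vball n t : ℝ) * ((2:ℝ)^k)⁻¹) := by
      have hval : ∀ x ∈ Finset.univ.filter (fun x : BV n => wt x ≤ t ∨ n - t ≤ wt x),
          H x * B x ≤ ((2:ℝ)^k)⁻¹ * (n.choose w : ℝ) := by
        intro x hx
        rw [Finset.mem_filter] at hx
        rw [hB]; dsimp only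
        rw [if_pos hx.2]
        exact mul_le_mul_of_nonneg_right (hHle x) (by positivity)
      refine le_trans (Finset.sum_le_sum hval) ?_
      rw [Finset.sum_const, nsmul_eq_mul]
      have hcard := card_bad_le (n := n) (t := t) htn
      have : ((Finset.univ.filter (fun x : BV n => wt x ≤ t ∨ n - t ≤ wt x)).card : ℝ)
          ≤ 2 * (Vball n t : ℝ) := by exact_mod_cast hcard
      calc ((Finset.univ.filter (fun x : BV n => wt x ≤ t ∨ n - t ≤ wt x)).card : ℝ)
            * (((2:ℝ)^k)⁻¹ * (n.choose w : ℝ))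
          ≤ (2 * (Vball n t : ℝ)) * (((2:ℝ)^k)⁻¹ * (n.choose w : ℝ)) := by
            refine mul_le_mul_of_nonneg_right this (by positivity)
        _ = (n.choose w : ℝ) * (2 * (Vball n t : ℝ) * ((2:ℝ)^k)⁻¹) := by ring
    have hpart2 : ∑ x ∈ Finset.univ.filter (fun x : BV n => ¬(wt x ≤ t ∨ n - t ≤ wt x)),
        H x * B x ≤ M := by
      have hval : ∀ x ∈ Finset.univ.filter (fun x : BV n => ¬(wt x ≤ t ∨ n - t ≤ wt x)),
          H x * B x = H x * M := by
        intro x hx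
        rw [Finset.mem_filter] at hx
        rw [hB]; dsimp only
        rw [if_neg hx.2]
      rw [Finset.sum_congr rfl hval, ← Finset.sum_mul]
      have hle1 : ∑ x ∈ Finset.univ.filter (fun x : BV n => ¬(wt x ≤ t ∨ n - t ≤ wt x)),
          H x ≤ 1 := by
        rw [← hHsum]
        exact Finset.sum_le_sum_of_subset_of_nonneg (Finset.filter_subset _ _)
          (fun x _ _ => hHnn x)
      calc (∑ x ∈ Finset.univ.filter (fun x : BV n => ¬(wt x ≤ t ∨ n - t ≤ wt x)), H x) * M
          ≤ 1 * M := mul_le_mul_of_nonneg_right hle1 hM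
        _ = M := one_mul M
    linarith
  calc ∑ z : BV n, ∑ z' : BV n, R z * R z' * Kraw n w (wt (z + z'))
      ≤ ∑ z : BV n, ∑ z' : BV n, R z * R z' * B (z + z') := step1
    _ = ∑ z : BV n, ∑ x : BV n, R z * R (z + x) * B x :=
        Finset.sum_congr rfl fun z _ => step2 z
    _ = ∑ x : BV n, H x * B x := by
        rw [step3]
    _ ≤ _ := step4

lemma surj_of_rank {n k : ℕ} (G : Matrix (Fin k) (Fin n) (ZMod 2)) (hrank : G.rank = k) :
    Function.Surjective (G.mulVec : BV n → BV k) := by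
  have hfin : Module.finrank (ZMod 2) (BV k) = k := by
    rw [Module.finrank_pi, Fintype.card_fin]
  have htop : LinearMap.range G.mulVecLin = ⊤ := by
    apply Submodule.eq_top_of_finrank_eq
    rw [hfin]
    exact hrank
  intro u
  have : u ∈ LinearMap.range G.mulVecLin := htop ▸ Submodule.mem_top
  obtain ⟨z, hz⟩ := this
  exact ⟨z, by rw [← Matrix.mulVecLin_apply]; exact hz⟩

lemma dotp_mulVec {n k : ℕ} (G : Matrix (Fin k) (Fin n) (ZMod 2)) (y : BV n) (i : Fin k) :
    dotp y (G i) = G.mulVec y i := by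
  rw [dotp, Matrix.mulVec, dotProduct]
  exact Finset.sum_congr rfl fun j _ => mul_comm _ _

lemma dualSet_eq_ker {n k : ℕ} (G : Matrix (Fin k) (Fin n) (ZMod 2)) :
    dualSet ((rowSpan G : Submodule (ZMod 2) (BV n)) : Set (BV n))
      = (LinearMap.ker G.mulVecLin : Set (BV n)) := by
  ext y
  simp only [dualSet, Set.mem_setOf_eq, SetLike.mem_coe, LinearMap.mem_ker]
  constructor
  · intro h
    funext i
    have hGi : (G i) ∈ (rowSpan G : Submodule (ZMod 2) (BV n)) :=
      Submodule.subset_span ⟨i, rfl⟩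
    have := h (G i) hGi
    rw [dotp_mulVec] at this
    rw [Matrix.mulVecLin_apply]
    exact this
  · intro h c hc
    have hmv : ∀ i, G.mulVec y i = 0 := by
      intro i
      rw [← Matrix.mulVecLin_apply, h]
      rfl
    induction hc using Submodule.span_induction with
    | mem c hcm =>
        obtain ⟨i, rfl⟩ := hcm
        rw [dotp_mulVec]
        exact hmv i
    | zero => simp [dotp]
    | add a b _ _ ha hb => rw [dotp_add_right, ha, hb, add_zero]
    | smul r a _ ha =>
        have : dotp y (r • a) = r * dotp y a := by
          rw [dotp, dotp, Finset.mul_sum]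
          exact Finset.sum_congr rfl fun j _ => by
            show y j * (r * a j) = r * (y j * a j); ring
        rw [this, ha, mul_zero]

lemma card_dualSet {n k : ℕ} (G : Matrix (Fin k) (Fin n) (ZMod 2)) (hrank : G.rank = k) :
    Nat.card (dualSet ((rowSpan G : Submodule (ZMod 2) (BV n)) : Set (BV n))) = 2^(n-k) := by
  rw [dualSet_eq_ker]
  have hker : Module.finrank (ZMod 2) (LinearMap.ker G.mulVecLin) = n - k := by
    have h1 := LinearMap.finrank_range_add_finrank_ker (G.mulVecLin)
    have h2 : Module.finrank (ZMod 2) (BV n) = n := by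
      rw [Module.finrank_pi, Fintype.card_fin]
    rw [h2] at h1
    have h3 : Module.finrank (ZMod 2) (LinearMap.range G.mulVecLin) = k := hrank
    omega
  have hcard : Fintype.card (LinearMap.ker G.mulVecLin) = 2 ^ (n - k) := by
    have := Module.card_eq_pow_finrank (K := ZMod 2) (V := LinearMap.ker G.mulVecLin)
    rw [ZMod.card, hker] at this
    exact this
  have : Nat.card (LinearMap.ker G.mulVecLin) = 2 ^ (n - k) := by
    rw [Nat.card_eq_fintype_card]
    exact hcard
  rw [← this]
  exact Nat.card_congr (Equiv.setCongr rfl)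

lemma unif_BV (k : ℕ) : unif (BV k) = fun _ => ((2:ℝ)^k)⁻¹ := by
  funext u
  rw [unif]
  have : (Fintype.card (BV k) : ℝ) = 2^k := by simp [Fintype.card_fun]
  rw [this, one_div]

lemma sqrt_add_le (x y : ℝ) (hx : 0 ≤ x) (hy : 0 ≤ y) :
    Real.sqrt (x + y) ≤ Real.sqrt x + Real.sqrt y := by
  rw [← Real.sqrt_sq (add_nonneg (Real.sqrt_nonneg x) (Real.sqrt_nonneg y))]
  refine Real.sqrt_le_sqrt ?_
  nlinarith [Real.sq_sqrt hx, Real.sq_sqrt hy, Real.sqrt_nonneg x, Real.sqrt_nonneg y,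
    mul_nonneg (Real.sqrt_nonneg x) (Real.sqrt_nonneg y)]

lemma half_sqrt (x : ℝ) : (1/2) * Real.sqrt x = Real.sqrt (x / 4) := by
  rw [eq_comm, show x / 4 = x * (1/4) by ring,
    Real.sqrt_mul' x (by norm_num : (0:ℝ) ≤ 1/4),
    show (1/4 : ℝ) = (1/2)^2 by norm_num,
    Real.sqrt_sq (by norm_num : (0:ℝ) ≤ 1/2)]
  ring


set_option maxHeartbeats 2000000 in
theorem average_bias_bound (n k : ℕ) (c C0 : ℝ)
    (hc : c ∈ Set.Ioo (0 : ℝ) 1) (hC0 : 1 ≤ C0)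
    (hK : ∀ w i : ℕ, (w : ℝ) ≤ c * n → (i : ℝ) ≤ (n : ℝ) / 2 →
      |Kraw n w i| ≤ C0 * (n.choose w : ℝ) * (1 - 2 * w / n) ^ i)
    (G : Matrix (Fin k) (Fin n) (ZMod 2)) (hrank : G.rank = k)
    (dperp : ℕ)
    (hdperp : IsLeast
      {m : ℕ | ∃ y ∈ dualSet ((rowSpan G : Submodule (ZMod 2) (BV n)) : Set (BV n)),
        y ≠ 0 ∧ wt y = m} dperp)
    (hdn : (dperp : ℝ) < (n : ℝ) / 2)
    (w : ℕ) (hw : (w : ℝ) ≤ c * n) (ε : ℝ) (hε : 0 < ε)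
    (P : BV n → ℝ) (hP : IsPMF P)
    (ht : dTV (pmfMap G P) (unif (BV k)) ≤ ε) :
    (1 / (n.choose w : ℝ)) * ∑ e ∈ Finset.univ.filter (fun e : BV n => wt e = w), |biasOf e P|
      ≤ Real.sqrt ((Nat.card (dualSet ((rowSpan G : Submodule (ZMod 2) (BV n)) : Set (BV n))) : ℝ)
            * (Vball n ((dperp - 1) / 2) : ℝ) / 2 ^ (n + 1))
          + Real.sqrt (C0 * n) / 2 * Real.sqrt ((1 - 2 * w / n) ^ ((dperp - 1) / 2))
          + Real.sqrt (ε / 2) := by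
  classical
  set t : ℕ := (dperp - 1) / 2 with htdef
  set β : ℝ := 1 - 2 * w / n with hβ
  -- basic facts
  have hdperp1 : 1 ≤ dperp := by
    obtain ⟨y, _, hy0, hwt⟩ := hdperp.1
    rcases Nat.eq_zero_or_pos dperp with h | h
    · exfalso
      apply hy0
      rw [h] at hwt
      have hemp : Finset.univ.filter (fun i => y i ≠ 0) = ∅ := Finset.card_eq_zero.mp hwt
      funext i
      by_contra hyi
      have hmem : i ∈ Finset.univ.filter (fun i => y i ≠ 0) :=
        Finset.mem_filter.mpr ⟨Finset.mem_univ i, hyi⟩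
      rw [hemp] at hmem
      exact Finset.notMem_empty i hmem
    · exact h
  have hn3 : 3 ≤ n := by
    have h1 : (1:ℝ) ≤ (dperp : ℝ) := by exact_mod_cast hdperp1
    have h2 : (2:ℝ) < (n:ℝ) := by linarith
    have : (2:ℕ) < n := by exact_mod_cast h2
    omega
  have hn0 : (0:ℝ) < (n:ℝ) := by
    have : 0 < n := by omega
    exact_mod_cast this
  have hwn : (w:ℝ) < (n:ℝ) := lt_of_le_of_lt hw (by nlinarith [hc.2, hn0])
  have hwnn : w ≤ n := by
    have : w < n := by exact_mod_cast hwn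
    omega
  have hchoose : (0:ℝ) < (n.choose w : ℝ) := by exact_mod_cast Nat.choose_pos hwnn
  have hβ1 : β ≤ 1 := by
    rw [hβ]
    have : 0 ≤ 2 * (w:ℝ) / n := by positivity
    linarith
  have hβ0 : 0 ≤ β := by
    by_contra hneg
    push_neg at hneg
    have h1n : ((1:ℕ):ℝ) ≤ (n:ℝ)/2 := by
      push_cast
      have : (3:ℝ) ≤ (n:ℝ) := by exact_mod_cast hn3
      linarith
    have hk1 := hK w 1 hw h1n
    rw [pow_one] at hk1
    rw [← hβ] at hk1
    have hneg2 : C0 * (n.choose w : ℝ) * β < 0 :=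
      mul_neg_of_pos_of_neg (mul_pos (lt_of_lt_of_le one_pos hC0) hchoose) hneg
    linarith [abs_nonneg (Kraw n w 1)]
  have htn : t ≤ n := by
    have h1 : (dperp:ℝ) < n := by linarith
    have hdn2 : dperp < n := by exact_mod_cast h1
    omega
  have hkn : k ≤ n := by
    have h := Matrix.rank_le_card_width G
    rw [hrank, Fintype.card_fin] at h
    exact h
  have hsurj := surj_of_rank G hrank
  set R : BV n → ℝ := Ptil G P with hRdef
  have hR0 : ∀ z, 0 ≤ R z := fun z => Ptil_nonneg hP z
  have hR1 : ∑ z, R z = 1 := sum_Ptil hsurj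
  have hR2 : ∑ z, (R z)^2 ≤ ((2:ℝ)^k)⁻¹ := sum_sq_Ptil hsurj hP
  have hC0nn : (0:ℝ) ≤ C0 := by linarith
  set M : ℝ := C0 * (n.choose w : ℝ) * β ^ t with hMdef
  have hM0 : 0 ≤ M := by
    refine mul_nonneg (mul_nonneg hC0nn (le_of_lt hchoose)) (pow_nonneg hβ0 t)
  have hmid : ∀ i : ℕ, t ≤ i → i ≤ n - t → |Kraw n w i| ≤ M := by
    intro i hti hit
    have hin : i ≤ n := le_trans hit (Nat.sub_le n t)
    have hpow : ∀ j : ℕ, t ≤ j → β ^ j ≤ β ^ t := fun j hj =>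
      pow_le_pow_of_le_one hβ0 hβ1 hj
    rcases le_or_gt (2 * i) n with hcase | hcase
    · have hi2 : (i:ℝ) ≤ (n:ℝ)/2 := by
        have h1 : ((2*i : ℕ):ℝ) ≤ (n:ℝ) := by exact_mod_cast hcase
        push_cast at h1
        linarith
      refine le_trans (hK w i hw hi2) ?_
      rw [hMdef, ← hβ]
      exact mul_le_mul_of_nonneg_left (hpow i hti)
        (mul_nonneg hC0nn (le_of_lt hchoose))
    · have h2 : ((n - i : ℕ):ℝ) ≤ (n:ℝ)/2 := by
        have h1 : ((2*(n-i) : ℕ):ℝ) ≤ (n:ℝ) := by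
          have : 2*(n-i) ≤ n := by omega
          exact_mod_cast this
        push_cast [Nat.sub_le n i] at h1 ⊢
        linarith
      have h3 : t ≤ n - i := by omega
      have h4 : i = n - (n - i) := by omega
      rw [h4, abs_kraw_reflect (Nat.sub_le n i)]
      refine le_trans (hK w (n-i) hw h2) ?_
      rw [hMdef, ← hβ]
      exact mul_le_mul_of_nonneg_left (hpow (n-i) h3)
        (mul_nonneg hC0nn (le_of_lt hchoose))
  set sphere := Finset.univ.filter (fun e : BV n => wt e = w) with hsph
  have hsphcard : (sphere.card : ℝ) = (n.choose w : ℝ) := by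
    rw [hsph, card_wt]
  -- quadratic bound on the smoothed distribution
  set RHS2 : ℝ := 2 * (Vball n t : ℝ) * ((2:ℝ)^k)⁻¹ + C0 * β ^ t with hRHS2
  have hV0 : (0:ℝ) ≤ (Vball n t : ℝ) := Nat.cast_nonneg _
  have hterm1nn : (0:ℝ) ≤ 2 * (Vball n t : ℝ) * ((2:ℝ)^k)⁻¹ := by positivity
  have hterm2nn : (0:ℝ) ≤ C0 * β ^ t := mul_nonneg hC0nn (pow_nonneg hβ0 t)
  have hsq : ∑ e ∈ sphere, (biasOf e R)^2 ≤ (n.choose w : ℝ) * RHS2 / 4 := by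
    have h1 : ∀ e, (biasOf e R)^2 = (1/4) * (∑ z, R z * chi (dotp e z))^2 := by
      intro e; rw [bias_eq_half_sum e R hR1]; ring
    rw [Finset.sum_congr rfl (fun e _ => h1 e), ← Finset.mul_sum, hsph, sphere_sq_eq]
    have h2 := double_sum_bound k w t R hR0 hR1 hR2 M hM0 hmid htn
    rw [hMdef] at h2
    rw [hRHS2]
    nlinarith [h2]
  have hCS : (∑ e ∈ sphere, |biasOf e R|)^2 ≤ (n.choose w : ℝ)^2 * RHS2 / 4 := by
    have h1 := sq_sum_le_card_mul_sum_sq (s := sphere) (f := fun e => |biasOf e R|)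
    have h2 : ∑ e ∈ sphere, |biasOf e R|^2 = ∑ e ∈ sphere, (biasOf e R)^2 :=
      Finset.sum_congr rfl fun e _ => sq_abs _
    rw [h2] at h1
    calc (∑ e ∈ sphere, |biasOf e R|)^2
        ≤ (sphere.card : ℝ) * ∑ e ∈ sphere, (biasOf e R)^2 := by exact_mod_cast h1
      _ = (n.choose w : ℝ) * ∑ e ∈ sphere, (biasOf e R)^2 := by rw [hsphcard]
      _ ≤ (n.choose w : ℝ) * ((n.choose w : ℝ) * RHS2 / 4) :=
          mul_le_mul_of_nonneg_left hsq (le_of_lt hchoose)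
      _ = (n.choose w : ℝ)^2 * RHS2 / 4 := by ring
  have hsumabs : ∑ e ∈ sphere, |biasOf e R| ≤ (n.choose w : ℝ) / 2 * Real.sqrt RHS2 := by
    have hnn : (0:ℝ) ≤ ∑ e ∈ sphere, |biasOf e R| :=
      Finset.sum_nonneg fun e _ => abs_nonneg _
    have h3 : (n.choose w : ℝ)^2 * RHS2 / 4 = ((n.choose w : ℝ)/2)^2 * RHS2 := by ring
    have h4 : Real.sqrt (((n.choose w : ℝ)/2)^2 * RHS2)
        = (n.choose w : ℝ)/2 * Real.sqrt RHS2 := by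
      rw [Real.sqrt_mul (sq_nonneg _), Real.sqrt_sq (by positivity)]
    calc ∑ e ∈ sphere, |biasOf e R|
        = Real.sqrt ((∑ e ∈ sphere, |biasOf e R|)^2) := (Real.sqrt_sq hnn).symm
      _ ≤ Real.sqrt (((n.choose w : ℝ)/2)^2 * RHS2) := by
          refine Real.sqrt_le_sqrt ?_
          rw [← h3]; exact hCS
      _ = _ := h4
  -- TV distance between P and R
  have hdtv : (1/2) * ∑ z, |P z - R z| ≤ ε := by
    rw [hRdef, sum_abs_diff_Ptil hsurj hP]
    calc (1/2) * ∑ u, |pmfMap G P u - ((2:ℝ)^k)⁻¹|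
        = dTV (pmfMap G P) (unif (BV k)) := by rw [dTV, unif_BV]
      _ ≤ ε := ht
  have hbias_diff : ∀ e : BV n, |biasOf e P| ≤ |biasOf e R| + (1/2) * ∑ z, |P z - R z| := by
    intro e
    have h1 : |biasOf e P| ≤ |biasOf e R| + |biasOf e P - biasOf e R| := by
      have := abs_sub_abs_le_abs_sub (biasOf e P) (biasOf e R)
      linarith [abs_nonneg (biasOf e P - biasOf e R)]
    exact le_trans h1 (by linarith [abs_bias_diff e P R hP.2 hR1])
  -- final split on size of ε
  have hsqrt_nn1 : (0:ℝ) ≤ Real.sqrt ((Nat.card (dualSet ((rowSpan G : Submodule (ZMod 2) (BV n)) : Set (BV n))) : ℝ)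
      * (Vball n t : ℝ) / 2 ^ (n + 1)) := Real.sqrt_nonneg _
  have hsqrt_nn2 : (0:ℝ) ≤ Real.sqrt (C0 * n) / 2 * Real.sqrt (β ^ t) := by positivity
  rcases le_or_gt ε (1/2) with hehalf | hehalf
  · -- small ε
    have heps : ε ≤ Real.sqrt (ε/2) := by
      rw [Real.le_sqrt (le_of_lt hε) (by positivity)]
      nlinarith
    have hmain : (1 / (n.choose w : ℝ)) * ∑ e ∈ sphere, |biasOf e P|
        ≤ (1/2) * Real.sqrt RHS2 + ε := by
      have h1 : ∑ e ∈ sphere, |biasOf e P|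
          ≤ ∑ e ∈ sphere, |biasOf e R| + (sphere.card : ℝ) * ((1/2) * ∑ z, |P z - R z|) := by
        calc ∑ e ∈ sphere, |biasOf e P|
            ≤ ∑ e ∈ sphere, (|biasOf e R| + (1/2) * ∑ z, |P z - R z|) :=
              Finset.sum_le_sum fun e _ => hbias_diff e
          _ = _ := by rw [Finset.sum_add_distrib, Finset.sum_const, nsmul_eq_mul]
      have h2 : ∑ e ∈ sphere, |biasOf e P|
          ≤ (n.choose w : ℝ) / 2 * Real.sqrt RHS2 + (n.choose w : ℝ) * ε := by
        refine le_trans h1 ?_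
        rw [hsphcard]
        have := mul_le_mul_of_nonneg_left hdtv (le_of_lt hchoose)
        linarith [hsumabs]
      rw [div_mul_eq_mul_div, div_le_iff₀ hchoose]
      calc 1 * ∑ e ∈ sphere, |biasOf e P| = ∑ e ∈ sphere, |biasOf e P| := by
            rw [one_mul]
        _ ≤ (n.choose w : ℝ) / 2 * Real.sqrt RHS2 + (n.choose w : ℝ) * ε := h2
        _ = ((1/2) * Real.sqrt RHS2 + ε) * (n.choose w : ℝ) := by ring
    refine le_trans hmain ?_
    have hsplit : (1/2) * Real.sqrt RHS2
        ≤ (1/2) * Real.sqrt (2 * (Vball n t : ℝ) * ((2:ℝ)^k)⁻¹)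
          + (1/2) * Real.sqrt (C0 * β ^ t) := by
      rw [hRHS2]
      have := sqrt_add_le _ _ hterm1nn hterm2nn
      linarith
    have hfirst : (1/2) * Real.sqrt (2 * (Vball n t : ℝ) * ((2:ℝ)^k)⁻¹)
        ≤ Real.sqrt ((Nat.card (dualSet ((rowSpan G : Submodule (ZMod 2) (BV n)) : Set (BV n))) : ℝ)
            * (Vball n t : ℝ) / 2 ^ (n + 1)) := by
      rw [half_sqrt]
      refine Real.sqrt_le_sqrt ?_
      rw [card_dualSet G hrank]
      push_cast
      rw [div_le_div_iff₀ (by norm_num) (by positivity)]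
      have hexp : (2:ℝ)^(n-k) * (2:ℝ)^k = (2:ℝ)^n := by
        rw [← pow_add]
        congr 1
        omega
      have h2k : (0:ℝ) < (2:ℝ)^k := by positivity
      have calc1 : 2 * (Vball n t : ℝ) * ((2:ℝ)^k)⁻¹ * 2^(n+1)
          = (Vball n t : ℝ) * ((2:ℝ)^(n+2) / (2:ℝ)^k) := by
        rw [pow_succ, pow_succ]
        field_simp
        ring
      rw [calc1]
      have calc2 : (2:ℝ)^(n-k) * (Vball n t : ℝ) * 4 = (Vball n t : ℝ) * ((2:ℝ)^(n-k) * 4) := by ring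
      rw [calc2]
      refine mul_le_mul_of_nonneg_left ?_ hV0
      rw [div_le_iff₀ h2k]
      refine le_of_eq ?_
      calc (2:ℝ)^(n+2) = (2:ℝ)^n * 4 := by rw [pow_succ, pow_succ]; ring
        _ = (2:ℝ)^(n-k) * (2:ℝ)^k * 4 := by rw [hexp]
        _ = (2:ℝ)^(n-k) * 4 * (2:ℝ)^k := by ring
      
    have hsecond : (1/2) * Real.sqrt (C0 * β ^ t)
        ≤ Real.sqrt (C0 * n) / 2 * Real.sqrt (β ^ t) := by
      rw [Real.sqrt_mul hC0nn]
      have h1 : Real.sqrt C0 ≤ Real.sqrt (C0 * n) := by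
        refine Real.sqrt_le_sqrt ?_
        nlinarith [show (3:ℝ) ≤ (n:ℝ) from by exact_mod_cast hn3, hC0]
      have h2 : (0:ℝ) ≤ Real.sqrt (β ^ t) := Real.sqrt_nonneg _
      calc (1/2) * (Real.sqrt C0 * Real.sqrt (β^t))
          ≤ (1/2) * (Real.sqrt (C0 * n) * Real.sqrt (β^t)) := by nlinarith
        _ = Real.sqrt (C0 * n) / 2 * Real.sqrt (β^t) := by ring
    have heq : (2:ℝ)^(n+1) = (2:ℝ)^(n+1) := rfl
    linarith [hsplit, hfirst, hsecond, heps]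
  · -- large ε : trivial bound 1/2
    have hhalf : (1/2 : ℝ) ≤ Real.sqrt (ε/2) := by
      rw [Real.le_sqrt (by norm_num) (by positivity)]
      nlinarith
    have htriv : (1 / (n.choose w : ℝ)) * ∑ e ∈ sphere, |biasOf e P| ≤ 1/2 := by
      have h1 : ∑ e ∈ sphere, |biasOf e P| ≤ (sphere.card : ℝ) * (1/2) := by
        calc ∑ e ∈ sphere, |biasOf e P| ≤ ∑ _e ∈ sphere, (1/2 : ℝ) :=
              Finset.sum_le_sum fun e _ => abs_bias_le_half e P hP
          _ = (sphere.card : ℝ) * (1/2) := by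
              rw [Finset.sum_const, nsmul_eq_mul]
      rw [hsphcard] at h1
      rw [div_mul_eq_mul_div, div_le_iff₀ hchoose]
      calc 1 * ∑ e ∈ sphere, |biasOf e P| = ∑ e ∈ sphere, |biasOf e P| := by rw [one_mul]
        _ ≤ (n.choose w : ℝ) * (1/2) := h1
        _ = 1/2 * (n.choose w : ℝ) := by ring
    linarith [htriv, hhalf]
end

section
/- Let C' ⊆ F_2^n be a linear code of minimum distance at least 3, let γ ∈ [0,1], and let P_Z = (1−γ)·U_n + γ·1_{S(0,1)}/n. Then d_TV(P_{C'} ∗ P_Z, U_n) = γ·(1 − n·|C'|/2^n). -/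
open Finset Filter
open scoped Classical BigOperators Topology

lemma zmod2_ne_zero {x : ZMod 2} (h : x ≠ 0) : x = 1 := by revert h; revert x; decide

lemma wt_add_le {n : ℕ} (a b : BV n) : wt (a + b) ≤ wt a + wt b := by
  unfold wt
  refine le_trans (Finset.card_le_card ?_) (Finset.card_union_le _ _)
  intro i hi
  simp only [mem_filter, mem_union, mem_univ, true_and] at *
  by_contra h
  push_neg at h
  simp [Pi.add_apply, h.1, h.2] at hi

lemma sub_eq_add' {n : ℕ} (a b : BV n) : a - b = a + b := by
  funext i
  exact CharTwo.sub_eq_add (a i) (b i)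

lemma sphere_card {n : ℕ} : (Finset.univ.filter (fun x : BV n => wt x = 1)).card = n := by
  have h : Finset.univ.filter (fun x : BV n => wt x = 1)
      = Finset.univ.image (fun i : Fin n => (Pi.single i 1 : BV n)) := by
    ext x
    simp only [mem_filter, mem_univ, true_and, mem_image]
    constructor
    · intro hx
      obtain ⟨i, hi⟩ := Finset.card_eq_one.mp hx
      have hji : ∀ j, x j ≠ 0 ↔ j = i := by
        intro j
        constructor
        · intro hj; have hm : j ∈ Finset.univ.filter (fun k => x k ≠ 0) := by simp [hj]
          rw [hi] at hm; simpa using hm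
        · intro hj
          have hm : i ∈ Finset.univ.filter (fun k => x k ≠ 0) := by rw [hi]; simp
          rw [hj]; simpa using hm
      refine ⟨i, ?_⟩
      funext j
      by_cases hj : j = i
      · rw [hj, Pi.single_eq_same]
        exact (zmod2_ne_zero ((hji i).mpr rfl)).symm
      · rw [Pi.single_eq_of_ne hj]
        by_contra hc
        exact hj ((hji j).mp (fun h => hc h.symm))
    · rintro ⟨i, rfl⟩
      have : Finset.univ.filter (fun j => (Pi.single i 1 : BV n) j ≠ 0) = {i} := by
        ext j
        simp only [mem_filter, mem_univ, true_and, mem_singleton]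
        by_cases hj : j = i
        · subst hj; simp
        · simp [Pi.single_eq_of_ne hj, hj]
      rw [wt, this, Finset.card_singleton]
  rw [h, Finset.card_image_of_injective _ ?_, Finset.card_univ, Fintype.card_fin]
  intro i j hij
  by_contra hne
  have h2 := congrFun hij i
  simp only [Pi.single_eq_same, Pi.single_eq_of_ne hne] at h2
  exact one_ne_zero h2

lemma sphere_card_trans {n : ℕ} (c : BV n) :
    (Finset.univ.filter (fun x : BV n => wt (x - c) = 1)).card = n := by
  have key : (Finset.univ.filter (fun x : BV n => wt (x - c) = 1)).card
      = (Finset.univ.filter (fun x : BV n => wt x = 1)).card := by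
    apply Finset.card_bij (fun x _ => x - c)
    · intro a ha; simpa using (Finset.mem_filter.mp ha).2
    · intro a _ b _ h; exact sub_left_injective h
    · intro b hb
      refine ⟨b + c, ?_, by simp⟩
      simp only [mem_filter, mem_univ, true_and] at *
      simpa using hb
  rw [key, sphere_card]

set_option maxHeartbeats 1000000 in
theorem smoothing_distance_three_code (n : ℕ) (hn : 1 ≤ n)
    (Cp : Submodule (ZMod 2) (BV n))
    (hdist : ∀ x ∈ Cp, x ≠ 0 → 3 ≤ wt x)
    (γ : ℝ) (hγ : γ ∈ Set.Icc (0 : ℝ) 1)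
    (P : BV n → ℝ)
    (hPdef : P = fun x => (1 - γ) * (1 / 2 ^ n) + γ * (if wt x = 1 then 1 else 0) / n) :
    dTV (conv (unifOn (Cp : Set (BV n))) P) (unif (BV n))
      = γ * (1 - n * (Nat.card Cp : ℝ) / 2 ^ n) := by
  obtain ⟨hγ0, hγ1⟩ := hγ
  set Cfin : Finset (BV n) := Finset.univ.filter (fun y : BV n => y ∈ Cp) with hCfin
  set N : ℕ := Cfin.card with hNdef
  have hNatcard : Nat.card ↥Cp = N := by
    rw [Nat.card_eq_fintype_card]; exact Fintype.card_subtype _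
  have hN0 : 0 < N := by
    apply Finset.card_pos.mpr
    exact ⟨0, by simp [hCfin]⟩
  have hcardBV : Fintype.card (BV n) = 2 ^ n := by simp
  set F : BV n → ℕ := fun x => (Cfin.filter (fun c => wt (x - c) = 1)).card with hF
  -- F x ≤ 1
  have hF1 : ∀ x, F x ≤ 1 := by
    intro x
    apply Finset.card_le_one.mpr
    intro a ha b hb
    simp only [hCfin, mem_filter, mem_univ, true_and] at ha hb
    by_contra hab
    have hmem : a - b ∈ Cp := Cp.sub_mem ha.1 hb.1
    have hne : a - b ≠ 0 := sub_ne_zero.mpr hab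
    have h3 := hdist _ hmem hne
    have heq : a - b = (x - b) + (x - a) := by
      rw [sub_eq_add', sub_eq_add', sub_eq_add']
      have hxx : x + x = 0 := by funext i; exact CharTwo.add_self_eq_zero (x i)
      calc a + b = (x + x) + (a + b) := by rw [hxx, zero_add]
      _ = (x + b) + (x + a) := by abel
    have hle2 : wt (a - b) ≤ 2 := by
      rw [heq]
      calc wt ((x-b) + (x-a)) ≤ wt (x-b) + wt (x-a) := wt_add_le _ _
      _ = 2 := by rw [ha.2, hb.2]
    omega
  -- sum of F
  have hFsum : ∑ x : BV n, F x = N * n := by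
    have : ∀ x : BV n, F x = ∑ c ∈ Cfin, if wt (x - c) = 1 then 1 else 0 := by
      intro x; simp only [hF]; rw [Finset.card_filter]
    simp_rw [this]
    rw [Finset.sum_comm]
    have : ∀ c ∈ Cfin, (∑ x : BV n, if wt (x - c) = 1 then 1 else 0) = n := by
      intro c _
      rw [← Finset.card_filter]
      exact sphere_card_trans c
    rw [Finset.sum_congr rfl this]
    simp [mul_comm]
    exact Or.inl hNdef.symm
  -- cardinality of the "covered" set
  have hA : (Finset.univ.filter (fun x : BV n => F x = 1)).card = N * n := by
    rw [← hFsum]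
    rw [Finset.card_filter]
    apply Finset.sum_congr rfl
    intro x _
    have := hF1 x
    by_cases h : F x = 1
    · simp [h]
    · have : F x = 0 := by omega
      simp [h, this]
  have hle : N * n ≤ 2 ^ n := by
    rw [← hA]
    calc (Finset.univ.filter (fun x : BV n => F x = 1)).card
        ≤ Finset.univ.card := Finset.card_filter_le _ _
    _ = 2 ^ n := by rw [Finset.card_univ, hcardBV]
  have hAc : (Finset.univ.filter (fun x : BV n => ¬ F x = 1)).card = 2 ^ n - N * n := by
    have h := Finset.card_filter_add_card_filter_not
      (s := (Finset.univ : Finset (BV n))) (p := fun x => F x = 1)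
    rw [Finset.card_univ, hcardBV, hA] at h
    omega
  -- positivity facts
  have hnR : (0:ℝ) < n := by exact_mod_cast hn
  have hNR : (0:ℝ) < N := by exact_mod_cast hN0
  have h2R : (0:ℝ) < 2 ^ n := by positivity
  have hleR : (N:ℝ) * n ≤ 2 ^ n := by exact_mod_cast hle
  -- conv formula
  have hconv : ∀ x, conv (unifOn (Cp : Set (BV n))) P x
      = (1 - γ) * (1 / 2 ^ n) + γ * (F x) / (n * N) := by
    intro x
    have hnc : ((Nat.card ↥(Cp : Set (BV n))) : ℝ) = (N:ℝ) := by
      norm_cast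
    simp only [conv, unifOn, SetLike.mem_coe, hnc]
    have hstep : ∀ y : BV n, (if y ∈ Cp then 1 / (N:ℝ) else 0) * P (x - y)
        = if y ∈ Cp then (1 / (N:ℝ)) * P (x - y) else 0 := by
      intro y; by_cases h : y ∈ Cp <;> simp [h]
    rw [Finset.sum_congr rfl (fun y _ => hstep y)]
    rw [← Finset.sum_filter, ← hCfin]
    simp only [hPdef]
    rw [Finset.sum_congr rfl (fun y _ => mul_add (1/(N:ℝ)) _ _)]
    rw [Finset.sum_add_distrib, Finset.sum_const, ← hNdef]
    have hsum2 : ∑ y ∈ Cfin, (1/(N:ℝ)) * (γ * (if wt (x - y) = 1 then (1:ℝ) else 0) / n)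
        = (1/(N:ℝ)) * (γ / n) * (F x) := by
      have hterm : ∀ y : BV n, (1/(N:ℝ)) * (γ * (if wt (x - y) = 1 then (1:ℝ) else 0) / n)
          = (1/(N:ℝ)) * (γ / n) * (if wt (x - y) = 1 then (1:ℝ) else 0) := by
        intro y; ring
      rw [Finset.sum_congr rfl (fun y _ => hterm y), ← Finset.mul_sum, Finset.sum_boole]
    rw [hsum2]
    rw [nsmul_eq_mul]
    field_simp
  -- final computation
  rw [dTV]
  have hterm : ∀ x : BV n,
      |conv (unifOn (Cp : Set (BV n))) P x - unif (BV n) x|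
      = if F x = 1 then γ * (1 / (n * N) - 1 / 2 ^ n) else γ * (1 / 2 ^ n) := by
    intro x
    rw [hconv x]
    simp only [unif, hcardBV]
    by_cases h : F x = 1
    · rw [if_pos h, h]
      rw [abs_of_nonneg]
      · push_cast; ring
      · have h1 : (1:ℝ) / 2 ^ n ≤ 1 / ((n:ℝ) * N) := by
          apply one_div_le_one_div_of_le (by positivity)
          rw [mul_comm]; exact hleR
        have h2 : (0:ℝ) ≤ γ * (1 / ((n:ℝ) * N) - 1 / 2 ^ n) := by
          apply mul_nonneg hγ0; linarith
        push_cast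
        have heq : (1 - γ) * (1 / (2:ℝ) ^ n) + γ * 1 / ((n:ℝ) * N) - 1 / 2 ^ n
            = γ * (1 / ((n:ℝ) * N) - 1 / 2 ^ n) := by ring
        linarith [heq, h2]
    · have h0 : F x = 0 := by have := hF1 x; omega
      rw [if_neg h, h0]
      rw [abs_of_nonpos]
      · push_cast; ring
      · have h2 : (0:ℝ) ≤ γ / 2 ^ n := by positivity
        push_cast
        have heq : (1 - γ) * (1 / (2:ℝ) ^ n) + γ * 0 / ((n:ℝ) * N) - 1 / 2 ^ n
            = -(γ / 2 ^ n) := by ring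
        linarith [heq, h2]
  rw [Finset.sum_congr rfl (fun x _ => hterm x)]
  rw [← Finset.sum_filter_add_sum_filter_not Finset.univ (fun x => F x = 1)]
  rw [Finset.sum_congr rfl (fun x hx => if_pos (Finset.mem_filter.mp hx).2)]
  rw [Finset.sum_congr rfl (fun x hx => if_neg (Finset.mem_filter.mp hx).2)]
  rw [Finset.sum_const, Finset.sum_const]
  rw [hA, hAc, nsmul_eq_mul, nsmul_eq_mul, hNatcard]
  rw [Nat.cast_sub hle]
  push_cast
  have hNne : (N:ℝ) ≠ 0 := ne_of_gt hNR
  have hnne : (n:ℝ) ≠ 0 := ne_of_gt hnR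
  have h2ne : (2:ℝ) ^ n ≠ 0 := ne_of_gt h2R
  field_simp
  ring
end
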